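/- Let α > 0 and b > 0. Let (S_i)_{i≥1} be i.i.d. nonnegative random variables whose tail satisfies x^α · P(S_1 > x) → b^α as x → ∞, and let N have the modified geometric distribution with parameters (g,p) with 0 ≤ g < 1 and 0 < p ≤ 1, independent of the sequence (S_i). Then the random sum S̃ = Σ_{i=1}^{N} S_i satisfies x^α · P(S̃ > x) → E[N] · b^α as x → ∞; in particular the CCDF of S̃ decays as a Pareto tail with the same exponent α. -/

import Mathlib

open MeasureTheory ProbabilityTheory Filter
open scoped ENNReal

section helpers
variable {Ω : Type*} [MeasurableSpace Ω]

/-- If `x^α * F x → A` with `α > 0`, then `F x → 0`. -/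
lemma tail_tendsto_zero {α A : ℝ} (hα : 0 < α) {F : ℝ → ℝ}
    (h : Tendsto (fun x => x ^ α * F x) atTop (nhds A)) :
    Tendsto F atTop (nhds 0) := by
  have h2 := h.mul (tendsto_rpow_neg_atTop hα)
  rw [mul_zero] at h2
  refine h2.congr' ?_
  filter_upwards [eventually_gt_atTop (0:ℝ)] with x hx
  have hxa : x ^ α * x ^ (-α) = 1 := by
    rw [← Real.rpow_add hx]; simp
  calc x ^ α * F x * x ^ (-α) = F x * (x ^ α * x ^ (-α)) := by ring
    _ = F x := by rw [hxa, mul_one]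

/-- One big jump principle for two independent nonnegative random variables. -/
lemma one_big_jump (μ : Measure Ω) [IsProbabilityMeasure μ] {α A B : ℝ} (hα : 0 < α)
    {X Y : Ω → ℝ} (hXm : Measurable X) (hYm : Measurable Y)
    (hX0 : ∀ ω, 0 ≤ X ω) (hY0 : ∀ ω, 0 ≤ Y ω)
    (hindep : IndepFun X Y μ)
    (hA : Tendsto (fun x => x ^ α * (μ {ω | X ω > x}).toReal) atTop (nhds A))
    (hB : Tendsto (fun x => x ^ α * (μ {ω | Y ω > x}).toReal) atTop (nhds B)) :
    Tendsto (fun x => x ^ α * (μ {ω | X ω + Y ω > x}).toReal) atTop (nhds (A + B)) := by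
  set FX : ℝ → ℝ := fun x => (μ {ω | X ω > x}).toReal with hFX
  set FY : ℝ → ℝ := fun x => (μ {ω | Y ω > x}).toReal with hFY
  set L : ℝ → ℝ := fun x => x ^ α * (μ {ω | X ω + Y ω > x}).toReal with hL
  have hFXnn : ∀ x, 0 ≤ FX x := fun x => ENNReal.toReal_nonneg
  have hFYnn : ∀ x, 0 ≤ FY x := fun x => ENNReal.toReal_nonneg
  have hmeasX : ∀ c : ℝ, MeasurableSet {ω | X ω > c} := fun c =>
    measurableSet_lt measurable_const hXm
  have hmeasY : ∀ c : ℝ, MeasurableSet {ω | Y ω > c} := fun c =>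
    measurableSet_lt measurable_const hYm
  have hindep' : ∀ c d : ℝ, (μ ({ω | X ω > c} ∩ {ω | Y ω > d})).toReal = FX c * FY d := by
    intro c d
    have := hindep.measure_inter_preimage_eq_mul (Set.Ioi c) (Set.Ioi d)
      measurableSet_Ioi measurableSet_Ioi
    have h2 : μ ({ω | X ω > c} ∩ {ω | Y ω > d}) = μ {ω | X ω > c} * μ {ω | Y ω > d} := this
    rw [h2, ENNReal.toReal_mul]
  have hFY0 : Tendsto FY atTop (nhds 0) := tail_tendsto_zero hα hB
  -- lower bound function
  have hlow : ∀ x : ℝ, 0 < x →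
      x ^ α * FX x + x ^ α * FY x - (x ^ α * FX x) * FY x ≤ L x := by
    intro x hx
    have hsub : {ω | X ω > x} ∪ {ω | Y ω > x} ⊆ {ω | X ω + Y ω > x} := by
      rintro ω (h | h) <;> simp only [Set.mem_setOf_eq] at h ⊢
      · have := hY0 ω; linarith
      · have := hX0 ω; linarith
    have h1 : μ ({ω | X ω > x} ∪ {ω | Y ω > x}) + μ ({ω | X ω > x} ∩ {ω | Y ω > x})
        = μ {ω | X ω > x} + μ {ω | Y ω > x} := measure_union_add_inter _ (hmeasY x)
    have h1' : (μ ({ω | X ω > x} ∪ {ω | Y ω > x})).toReal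
        + (μ ({ω | X ω > x} ∩ {ω | Y ω > x})).toReal = FX x + FY x := by
      rw [← ENNReal.toReal_add (measure_ne_top μ _) (measure_ne_top μ _), h1,
        ENNReal.toReal_add (measure_ne_top μ _) (measure_ne_top μ _)]
    rw [hindep'] at h1'
    have h2 : (μ ({ω | X ω > x} ∪ {ω | Y ω > x})).toReal ≤ (μ {ω | X ω + Y ω > x}).toReal :=
      ENNReal.toReal_mono (measure_ne_top μ _) (measure_mono hsub)
    have hxnn : (0:ℝ) ≤ x ^ α := Real.rpow_nonneg hx.le α
    have : x ^ α * (FX x + FY x - FX x * FY x) ≤ x ^ α * (μ {ω | X ω + Y ω > x}).toReal := by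
      apply mul_le_mul_of_nonneg_left _ hxnn
      linarith
    calc x ^ α * FX x + x ^ α * FY x - (x ^ α * FX x) * FY x
        = x ^ α * (FX x + FY x - FX x * FY x) := by ring
      _ ≤ L x := this
  have hlowt : Tendsto (fun x => x ^ α * FX x + x ^ α * FY x - (x ^ α * FX x) * FY x)
      atTop (nhds (A + B)) := by
    have := (hA.add hB).sub (hA.mul hFY0)
    simpa using this
  rw [tendsto_order]
  constructor
  · -- lower
    intro a' ha'
    filter_upwards [hlowt.eventually (eventually_gt_nhds ha'), eventually_gt_atTop (0:ℝ)]
      with x h1 h2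
    exact lt_of_lt_of_le h1 (hlow x h2)
  · -- upper
    intro a' ha'
    -- A + B ≥ 0
    have hABnn : 0 ≤ A + B := by
      refine ge_of_tendsto hlowt ?_
      filter_upwards [hFY0.eventually (eventually_lt_nhds (by norm_num : (0:ℝ) < 1)),
        eventually_gt_atTop (0:ℝ)] with x h1 h2
      have hxnn : (0:ℝ) ≤ x ^ α := Real.rpow_nonneg h2.le α
      have h3 : FY x ≤ 1 := by
        have : μ {ω | Y ω > x} ≤ 1 := prob_le_one
        simpa [hFY] using ENNReal.toReal_mono ENNReal.one_ne_top this
      nlinarith [hFXnn x, hFYnn x, mul_nonneg hxnn (hFXnn x), mul_nonneg hxnn (hFYnn x)]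
    -- choose ε
    obtain ⟨ε, hε0, hε2, hεa⟩ : ∃ ε : ℝ, 0 < ε ∧ ε < 1/2 ∧ (1-ε) ^ (-α) * (A + B) < a' := by
      have hc : Tendsto (fun e : ℝ => (1-e) ^ (-α) * (A + B)) (nhds 0) (nhds (A + B)) := by
        have h1 : Tendsto (fun e : ℝ => (1-e)) (nhds 0) (nhds 1) := by
          have hco : Continuous (fun e : ℝ => 1 - e) := continuous_const.sub continuous_id
          simpa using hco.tendsto 0
        have h2 := h1.rpow_const (p := -α) (Or.inl one_ne_zero)
        rw [Real.one_rpow] at h2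
        simpa using h2.mul_const (A + B)
      have := hc.eventually (eventually_lt_nhds ha')
      rw [Metric.eventually_nhds_iff] at this
      obtain ⟨r, hr, hball⟩ := this
      refine ⟨min (r/2) (1/4), by positivity, ?_, ?_⟩
      · calc min (r/2) (1/4) ≤ 1/4 := min_le_right _ _
          _ < 1/2 := by norm_num
      · apply hball
        rw [Real.dist_eq]
        have h1 : min (r/2) (1/4) ≤ r/2 := min_le_left _ _
        have h2 : (0:ℝ) < min (r/2) (1/4) := by positivity
        rw [abs_of_pos (by simpa using h2)]
        simp only [sub_zero]
        linarith
    have hε1 : (0:ℝ) < 1 - ε := by linarith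
    -- upper bound function
    set U : ℝ → ℝ := fun x => (1-ε) ^ (-α) *
        (((1-ε)*x) ^ α * FX ((1-ε)*x) + ((1-ε)*x) ^ α * FY ((1-ε)*x))
      + (ε ^ (-α) * ((ε*x) ^ α * FX (ε*x))) * FY (ε*x) with hU
    have hUt : Tendsto U atTop (nhds ((1-ε) ^ (-α) * (A + B))) := by
      have hcomp1 : Tendsto (fun x : ℝ => (1-ε)*x) atTop atTop :=
        Tendsto.const_mul_atTop hε1 tendsto_id
      have hcomp2 : Tendsto (fun x : ℝ => ε*x) atTop atTop :=
        Tendsto.const_mul_atTop hε0 tendsto_id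
      have h1 : Tendsto (fun x : ℝ => ((1-ε)*x) ^ α * FX ((1-ε)*x)) atTop (nhds A) :=
        hA.comp hcomp1
      have h2 : Tendsto (fun x : ℝ => ((1-ε)*x) ^ α * FY ((1-ε)*x)) atTop (nhds B) :=
        hB.comp hcomp1
      have h3 : Tendsto (fun x : ℝ => (ε*x) ^ α * FX (ε*x)) atTop (nhds A) := hA.comp hcomp2
      have h4 : Tendsto (fun x : ℝ => FY (ε*x)) atTop (nhds 0) := hFY0.comp hcomp2
      have := (((h1.add h2).const_mul ((1-ε) ^ (-α))).add
        (((h3.const_mul (ε ^ (-α))).mul h4)))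
      simpa using this
    have hup : ∀ x : ℝ, 0 < x → L x ≤ U x := by
      intro x hx
      have hsub : {ω | X ω + Y ω > x} ⊆
          ({ω | X ω > (1-ε)*x} ∪ {ω | Y ω > (1-ε)*x}) ∪
          ({ω | X ω > ε*x} ∩ {ω | Y ω > ε*x}) := by
        intro ω hω
        simp only [Set.mem_setOf_eq, Set.mem_union, Set.mem_inter_iff] at *
        by_cases h1 : X ω > (1-ε)*x
        · exact Or.inl (Or.inl h1)
        by_cases h2 : Y ω > (1-ε)*x
        · exact Or.inl (Or.inr h2)
        push_neg at h1 h2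
        refine Or.inr ⟨by nlinarith, by nlinarith⟩
      have hm1 : μ {ω | X ω + Y ω > x} ≤ μ {ω | X ω > (1-ε)*x} + μ {ω | Y ω > (1-ε)*x}
          + μ ({ω | X ω > ε*x} ∩ {ω | Y ω > ε*x}) := by
        refine le_trans (measure_mono hsub) ?_
        refine le_trans (measure_union_le _ _) ?_
        exact add_le_add (measure_union_le (μ := μ) _ _) le_rfl
      have hm1' : (μ {ω | X ω + Y ω > x}).toReal ≤ FX ((1-ε)*x) + FY ((1-ε)*x)
          + FX (ε*x) * FY (ε*x) := by
        have hne : μ {ω | X ω > (1-ε)*x} + μ {ω | Y ω > (1-ε)*x}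
            + μ ({ω | X ω > ε*x} ∩ {ω | Y ω > ε*x}) ≠ ⊤ := by
          simp [ENNReal.add_ne_top, measure_ne_top]
        have := ENNReal.toReal_mono hne hm1
        rwa [ENNReal.toReal_add (by simp [ENNReal.add_ne_top, measure_ne_top]) (measure_ne_top μ _),
          ENNReal.toReal_add (measure_ne_top μ _) (measure_ne_top μ _), hindep'] at this
      have hxnn : (0:ℝ) ≤ x ^ α := Real.rpow_nonneg hx.le α
      have key : ∀ c : ℝ, 0 < c → x ^ α = c ^ (-α) * (c*x) ^ α := by
        intro c hc
        rw [Real.mul_rpow hc.le hx.le, ← mul_assoc, ← Real.rpow_add hc]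
        simp
      have h2 : x ^ α * (μ {ω | X ω + Y ω > x}).toReal
          ≤ x ^ α * (FX ((1-ε)*x) + FY ((1-ε)*x) + FX (ε*x) * FY (ε*x)) :=
        mul_le_mul_of_nonneg_left hm1' hxnn
      have h3 : x ^ α * (FX ((1-ε)*x) + FY ((1-ε)*x) + FX (ε*x) * FY (ε*x)) = U x := by
        simp only [hU]
        linear_combination (FX ((1-ε)*x) + FY ((1-ε)*x)) * (key (1-ε) hε1)
          + (FX (ε*x) * FY (ε*x)) * (key ε hε0)
      rw [hL]
      calc x ^ α * (μ {ω | X ω + Y ω > x}).toReal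
          ≤ x ^ α * (FX ((1-ε)*x) + FY ((1-ε)*x) + FX (ε*x) * FY (ε*x)) := h2
        _ = U x := h3
    filter_upwards [hUt.eventually (eventually_lt_nhds hεa), eventually_gt_atTop (0:ℝ)]
      with x h1 h2
    exact lt_of_le_of_lt (hup x h2) h1

/-- Tail of the `n`-fold sum of i.i.d. Pareto-tailed variables. -/
lemma nfold_tail (μ : Measure Ω) [IsProbabilityMeasure μ] {α b : ℝ} (hα : 0 < α)
    (S : ℕ → Ω → ℝ) (hSmeas : ∀ i, Measurable (S i)) (hSnonneg : ∀ i ω, 0 ≤ S i ω)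
    (hSindep : iIndepFun S μ)
    (hSident : ∀ i, 1 ≤ i → IdentDistrib (S i) (S 1) μ μ)
    (htail : Tendsto (fun x : ℝ => x ^ α * (μ {ω | S 1 ω > x}).toReal)
      atTop (nhds (b ^ α))) :
    ∀ n : ℕ, Tendsto
      (fun x : ℝ => x ^ α * (μ {ω | (∑ i ∈ Finset.Icc 1 n, S i ω) > x}).toReal)
      atTop (nhds (n * b ^ α)) := by
  intro n
  induction n with
  | zero =>
    have : (fun x : ℝ => x ^ α * (μ {ω | (∑ i ∈ Finset.Icc 1 0, S i ω) > x}).toReal)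
        =ᶠ[atTop] fun _ => (0:ℝ) := by
      filter_upwards [eventually_ge_atTop (0:ℝ)] with x hx
      have h0 : {ω : Ω | (∑ i ∈ Finset.Icc 1 0, S i ω) > x} = ∅ := by
        ext ω; simp only [Set.mem_setOf_eq, Set.mem_empty_iff_false, iff_false, not_lt]
        rw [show Finset.Icc 1 0 = ∅ from Finset.Icc_eq_empty (by omega)]
        simpa using hx
      rw [h0]
      simp
    rw [show ((0:ℕ):ℝ) * b ^ α = 0 by simp]
    exact Tendsto.congr' this.symm tendsto_const_nhds
  | succ n ih =>
    have hXm : Measurable (fun ω => ∑ i ∈ Finset.Icc 1 n, S i ω) :=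
      Finset.measurable_sum _ (fun i _ => hSmeas i)
    have hindep : IndepFun (fun ω => ∑ i ∈ Finset.Icc 1 n, S i ω) (S (n+1)) μ := by
      have := hSindep.indepFun_finsetSum_of_notMem hSmeas
        (s := Finset.Icc 1 n) (i := n+1) (by simp)
      have he : (∑ j ∈ Finset.Icc 1 n, S j) = (fun ω => ∑ i ∈ Finset.Icc 1 n, S i ω) := by
        funext ω; exact Finset.sum_apply ω _ _
      rwa [he] at this
    have htailY : Tendsto (fun x : ℝ => x ^ α * (μ {ω | S (n+1) ω > x}).toReal)
        atTop (nhds (b ^ α)) := by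
      refine htail.congr (fun x => ?_)
      congr 2
      exact ((hSident (n+1) (by omega)).measure_mem_eq (s := Set.Ioi x) measurableSet_Ioi).symm
    have := one_big_jump μ hα hXm (hSmeas (n+1))
      (fun ω => Finset.sum_nonneg fun i _ => hSnonneg i ω) (fun ω => hSnonneg (n+1) ω)
      hindep ih htailY
    have hset : ∀ x : ℝ, {ω | (∑ i ∈ Finset.Icc 1 (n+1), S i ω) > x}
        = {ω | (∑ i ∈ Finset.Icc 1 n, S i ω) + S (n+1) ω > x} := by
      intro x; ext ω
      simp only [Set.mem_setOf_eq]
      rw [Finset.sum_Icc_succ_top (by omega : 1 ≤ n + 1)]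
    have hval : ((n+1:ℕ):ℝ) * b ^ α = n * b ^ α + b ^ α := by push_cast; ring
    rw [hval]
    refine Tendsto.congr (fun x => ?_) this
    rw [hset x]

/-- A uniform bound on `y^α * tail`. -/
lemma sup_bound (μ : Measure Ω) [IsProbabilityMeasure μ] {α A : ℝ} (hα : 0 < α)
    {Z : Ω → ℝ}
    (h : Tendsto (fun x : ℝ => x ^ α * (μ {ω | Z ω > x}).toReal) atTop (nhds A)) :
    ∃ M : ℝ, 0 ≤ M ∧ ∀ y : ℝ, 0 < y → y ^ α * (μ {ω | Z ω > y}).toReal ≤ M := by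
  have h1 : ∀ᶠ y in atTop, y ^ α * (μ {ω | Z ω > y}).toReal < A + 1 :=
    h.eventually (eventually_lt_nhds (by linarith))
  obtain ⟨X0, hX0⟩ := eventually_atTop.1 h1
  set X1 := max X0 1 with hX1
  refine ⟨max (X1 ^ α) (A + 1), le_trans (Real.rpow_nonneg (by positivity) α) (le_max_left _ _), ?_⟩
  intro y hy
  rcases le_or_gt y X1 with hc | hc
  · refine le_trans ?_ (le_max_left _ _)
    have hF1 : (μ {ω | Z ω > y}).toReal ≤ 1 :=
      ENNReal.toReal_mono ENNReal.one_ne_top prob_le_one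
    have h2 : y ^ α ≤ X1 ^ α := Real.rpow_le_rpow hy.le hc hα.le
    nlinarith [Real.rpow_nonneg hy.le α, ENNReal.toReal_nonneg
      (a := μ {ω | Z ω > y})]
  · exact le_trans (hX0 y (le_trans (le_max_left _ _) hc.le)).le (le_max_right _ _)

/-- Crude uniform polynomial bound on the tail of the `k`-fold sum. -/
lemma kfold_bound (μ : Measure Ω) [IsProbabilityMeasure μ] {α M : ℝ} (hα : 0 < α)
    (hM : 0 ≤ M)
    (S : ℕ → Ω → ℝ) (hSmeas : ∀ i, Measurable (S i))
    (hSident : ∀ i, 1 ≤ i → IdentDistrib (S i) (S 1) μ μ)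
    (hsup : ∀ y : ℝ, 0 < y → y ^ α * (μ {ω | S 1 ω > y}).toReal ≤ M)
    (k : ℕ) (hk : 1 ≤ k) (x : ℝ) (hx : 1 ≤ x) :
    x ^ α * (μ {ω | (∑ i ∈ Finset.Icc 1 k, S i ω) > x}).toReal
      ≤ M * (k:ℝ) ^ α * (k:ℝ) := by
  set c : ℝ := (k:ℝ) with hc
  have hc1 : (1:ℝ) ≤ c := by rw [hc]; exact_mod_cast hk
  have hc0 : (0:ℝ) < c := by linarith
  have hx0 : (0:ℝ) < x := by linarith
  have hxc : 0 < x / c := by positivity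
  have hsub : {ω | (∑ i ∈ Finset.Icc 1 k, S i ω) > x}
      ⊆ ⋃ i ∈ Finset.Icc 1 k, {ω | S i ω > x / c} := by
    intro ω hω
    simp only [Set.mem_setOf_eq] at hω
    by_contra hcon
    simp only [Set.mem_iUnion, Set.mem_setOf_eq, not_exists, not_lt] at hcon
    have hle : ∑ i ∈ Finset.Icc 1 k, S i ω ≤ ∑ _i ∈ Finset.Icc 1 k, x / c :=
      Finset.sum_le_sum (fun i hi => hcon i hi)
    rw [Finset.sum_const, Nat.card_Icc] at hle
    simp only [Nat.add_sub_cancel, nsmul_eq_mul] at hle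
    rw [show ((k:ℝ)) * (x / c) = x by field_simp; exact hc.symm] at hle
    linarith
  have hmb : μ {ω | (∑ i ∈ Finset.Icc 1 k, S i ω) > x}
      ≤ ∑ i ∈ Finset.Icc 1 k, μ {ω | S i ω > x / c} :=
    le_trans (measure_mono hsub) (measure_biUnion_finset_le _ _)
  have heach : ∀ i ∈ Finset.Icc 1 k, μ {ω | S i ω > x / c} = μ {ω | S 1 ω > x / c} := by
    intro i hi
    rw [Finset.mem_Icc] at hi
    exact (hSident i hi.1).measure_mem_eq (s := Set.Ioi (x/c)) measurableSet_Ioi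
  have hmb2 : μ {ω | (∑ i ∈ Finset.Icc 1 k, S i ω) > x}
      ≤ (k : ℝ≥0∞) * μ {ω | S 1 ω > x / c} := by
    refine le_trans hmb ?_
    rw [Finset.sum_congr rfl heach, Finset.sum_const, Nat.card_Icc]
    simp [nsmul_eq_mul]
  have hreal : (μ {ω | (∑ i ∈ Finset.Icc 1 k, S i ω) > x}).toReal
      ≤ c * (μ {ω | S 1 ω > x / c}).toReal := by
    have hne : (k : ℝ≥0∞) * μ {ω | S 1 ω > x / c} ≠ ⊤ :=
      ENNReal.mul_ne_top (ENNReal.natCast_ne_top k) (measure_ne_top μ _)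
    have := ENNReal.toReal_mono hne hmb2
    rwa [ENNReal.toReal_mul, ENNReal.toReal_natCast] at this
  have hxsplit : x ^ α = c ^ α * (x / c) ^ α := by
    rw [← Real.mul_rpow hc0.le hxc.le]
    congr 1
    field_simp
  have hxnn : (0:ℝ) ≤ x ^ α := Real.rpow_nonneg hx0.le α
  calc x ^ α * (μ {ω | (∑ i ∈ Finset.Icc 1 k, S i ω) > x}).toReal
      ≤ x ^ α * (c * (μ {ω | S 1 ω > x / c}).toReal) :=
        mul_le_mul_of_nonneg_left hreal hxnn
    _ = (c ^ α * c) * ((x / c) ^ α * (μ {ω | S 1 ω > x / c}).toReal) := by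
        rw [hxsplit]; ring
    _ ≤ (c ^ α * c) * M := by
        refine mul_le_mul_of_nonneg_left (hsup _ hxc) ?_
        have := Real.rpow_nonneg hc0.le α
        positivity
    _ = M * c ^ α * c := by ring

/-- Summability of monomial moments of the modified geometric distribution. -/
lemma sumq (μ : Measure Ω) [IsProbabilityMeasure μ] {g p : ℝ} (hg0 : 0 ≤ g) (hg1 : g < 1)
    (hp0 : 0 < p) (hp1 : p ≤ 1) (N : Ω → ℕ) (hNpos : ∀ ω, 1 ≤ N ω)
    (hN1 : (μ {ω | N ω = 1}).toReal = g)
    (hNk : ∀ k : ℕ, 2 ≤ k → (μ {ω | N ω = k}).toReal = (1 - g) * (1 - p) ^ (k - 2) * p)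
    (m : ℕ) :
    Summable (fun k : ℕ => (k:ℝ)^m * (μ {ω | N ω = k}).toReal) := by
  have hq0 : (μ {ω | N ω = 0}).toReal = 0 := by
    have h0 : {ω | N ω = 0} = (∅ : Set Ω) := by
      ext ω; simp only [Set.mem_setOf_eq, Set.mem_empty_iff_false, iff_false]
      have := hNpos ω; omega
    simp [h0]
  have hqnn : ∀ k : ℕ, 0 ≤ (μ {ω | N ω = k}).toReal := fun k => ENNReal.toReal_nonneg
  rcases eq_or_lt_of_le hp1 with hp | hp
  · -- p = 1 : finitely supported
    apply summable_of_ne_finset_zero (s := Finset.range 3)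
    intro k hk
    rw [Finset.mem_range, not_lt] at hk
    rw [hNk k (by omega), hp]
    rw [show (1 - (1:ℝ)) ^ (k - 2) = 0 from by rw [sub_self]; exact zero_pow (by omega)]
    ring
  · -- p < 1 : geometric comparison
    set r : ℝ := 1 - p with hr
    have hr0 : 0 < r := by rw [hr]; linarith
    have hr1 : r < 1 := by rw [hr]; linarith
    have hsum : Summable (fun k : ℕ => (1 / r^2) * ((k:ℝ)^m * r^k)) :=
      (summable_pow_mul_geometric_of_norm_lt_one (R := ℝ) m
        (by rw [Real.norm_eq_abs, abs_of_pos hr0]; exact hr1)).mul_left _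
    refine Summable.of_nonneg_of_le (fun k => by positivity) ?_ hsum
    intro k
    match k with
    | 0 =>
      rw [hq0, mul_zero]
      positivity
    | 1 =>
      rw [hN1]
      have h1r : (1:ℝ) ≤ 1 / r := by rw [le_div_iff₀ hr0]; linarith
      have hrr : (1 / r^2) * (((1:ℕ):ℝ)^m * r^1) = 1 / r := by
        push_cast; field_simp; ring
      rw [hrr]
      calc ((1:ℕ):ℝ)^m * g = g := by push_cast; ring
        _ ≤ 1 := hg1.le
        _ ≤ 1 / r := h1r
    | (k+2) =>
      rw [hNk (k+2) (by omega)]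
      have hks : (k + 2) - 2 = k := by omega
      rw [hks]
      have hrk : (0:ℝ) ≤ r ^ k := by positivity
      have hfact : (1 - g) * r ^ k * p ≤ r ^ k := by
        have h1 : (1 - g) * p ≤ 1 := by nlinarith
        calc (1 - g) * r ^ k * p = ((1 - g) * p) * r ^ k := by ring
          _ ≤ 1 * r ^ k := mul_le_mul_of_nonneg_right h1 hrk
          _ = r ^ k := one_mul _
      have hrr : (1 / r^2) * (((k+2:ℕ):ℝ)^m * r^(k+2)) = ((k+2:ℕ):ℝ)^m * r^k := by
        field_simp; ring
      rw [hrr]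
      exact mul_le_mul_of_nonneg_left hfact (by positivity)

end helpers

/-- Pareto tail of the measured intercontact time: if the i.i.d. nonnegative `(S i)`
have a Pareto-like tail `x^α P(S > x) → b^α`, and `N` has the modified geometric
distribution with parameters `(g, p)` and is independent of the sequence, then the
random sum `S̃ = Σ_{i=1}^{N} S i` satisfies `x^α P(S̃ > x) → E[N] · b^α`, i.e. its CCDF
decays as a Pareto tail with the same exponent `α`. -/
theorem stmt_11 {Ω : Type*} [MeasurableSpace Ω] (μ : Measure Ω) [IsProbabilityMeasure μ]
    (α b : ℝ) (hα : 0 < α) (hb : 0 < b)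
    (S : ℕ → Ω → ℝ) (hSmeas : ∀ i, Measurable (S i)) (hSnonneg : ∀ i ω, 0 ≤ S i ω)
    (hSindep : iIndepFun S μ)
    (hSident : ∀ i, 1 ≤ i → IdentDistrib (S i) (S 1) μ μ)
    (htail : Tendsto (fun x : ℝ => x ^ α * (μ {ω | S 1 ω > x}).toReal)
      atTop (nhds (b ^ α)))
    (g p : ℝ) (hg0 : 0 ≤ g) (hg1 : g < 1) (hp0 : 0 < p) (hp1 : p ≤ 1)
    (N : Ω → ℕ) (hNmeas : Measurable N) (hNpos : ∀ ω, 1 ≤ N ω)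
    (hN1 : (μ {ω | N ω = 1}).toReal = g)
    (hNk : ∀ k : ℕ, 2 ≤ k → (μ {ω | N ω = k}).toReal = (1 - g) * (1 - p) ^ (k - 2) * p)
    (hNindep : IndepFun (fun ω => (fun i => S i ω)) N μ) :
    Tendsto
      (fun x : ℝ => x ^ α * (μ {ω | (∑ i ∈ Finset.Icc 1 (N ω), S i ω) > x}).toReal)
      atTop (nhds ((∫ ω, (N ω : ℝ) ∂μ) * b ^ α)) := by
  classical
  have hTmeas : ∀ k : ℕ, Measurable (fun ω => ∑ i ∈ Finset.Icc 1 k, S i ω) :=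
    fun k => Finset.measurable_sum _ (fun i _ => hSmeas i)
  have hq0 : (μ {ω | N ω = 0}).toReal = 0 := by
    have h0 : {ω | N ω = 0} = (∅ : Set Ω) := by
      ext ω; simp only [Set.mem_setOf_eq, Set.mem_empty_iff_false, iff_false]
      have := hNpos ω; omega
    simp [h0]
  have hqnn : ∀ k : ℕ, 0 ≤ (μ {ω | N ω = k}).toReal := fun k => ENNReal.toReal_nonneg
  -- decomposition of the tail of the random sum
  have hdecomp : ∀ x : ℝ, (μ {ω | (∑ i ∈ Finset.Icc 1 (N ω), S i ω) > x}).toReal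
      = ∑' k : ℕ, (μ {ω | N ω = k}).toReal
          * (μ {ω | (∑ i ∈ Finset.Icc 1 k, S i ω) > x}).toReal := by
    intro x
    have hset : {ω | (∑ i ∈ Finset.Icc 1 (N ω), S i ω) > x}
        = ⋃ k : ℕ, ({ω | N ω = k} ∩ {ω | (∑ i ∈ Finset.Icc 1 k, S i ω) > x}) := by
      ext ω
      simp only [Set.mem_setOf_eq, Set.mem_iUnion, Set.mem_inter_iff]
      constructor
      · exact fun h => ⟨N ω, rfl, h⟩
      · rintro ⟨k, hk, h⟩; rw [hk]; exact h
    have hmeas : ∀ k : ℕ,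
        MeasurableSet ({ω | N ω = k} ∩ {ω | (∑ i ∈ Finset.Icc 1 k, S i ω) > x}) := fun k =>
      (hNmeas (measurableSet_singleton k)).inter
        (measurableSet_lt measurable_const (hTmeas k))
    have hdisj : Pairwise (Function.onFun Disjoint
        fun k => {ω | N ω = k} ∩ {ω | (∑ i ∈ Finset.Icc 1 k, S i ω) > x}) := by
      intro i j hij
      refine Set.disjoint_left.2 ?_
      rintro ω ⟨h1, -⟩ ⟨h2, -⟩
      exact hij (h1.symm.trans h2)
    rw [hset, measure_iUnion hdisj hmeas,
      ENNReal.tsum_toReal_eq (fun k => measure_ne_top μ _)]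
    refine tsum_congr (fun k => ?_)
    have hI : IndepFun (fun ω => ∑ i ∈ Finset.Icc 1 k, S i ω) N μ := by
      have hφ : Measurable fun v : ℕ → ℝ => ∑ i ∈ Finset.Icc 1 k, v i :=
        Finset.measurable_sum _ (fun i _ => measurable_pi_apply i)
      exact hNindep.comp hφ measurable_id
    have h2 : μ ({ω | N ω = k} ∩ {ω | (∑ i ∈ Finset.Icc 1 k, S i ω) > x})
        = μ {ω | N ω = k} * μ {ω | (∑ i ∈ Finset.Icc 1 k, S i ω) > x} :=
      hI.symm.measure_inter_preimage_eq_mul ({k} : Set ℕ) (Set.Ioi x)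
        (measurableSet_singleton k) measurableSet_Ioi
    rw [h2, ENNReal.toReal_mul]
  -- expectation of N as a series
  have hsumq := sumq μ hg0 hg1 hp0 hp1 N hNpos hN1 hNk
  have hmap : ∀ k : ℕ, (μ.map N) {k} = μ {ω | N ω = k} := fun k => by
    rw [Measure.map_apply hNmeas (measurableSet_singleton k)]
    rfl
  have hint : Integrable (fun n : ℕ => (n:ℝ)) (μ.map N) := by
    constructor
    · exact (measurable_of_countable _).aestronglyMeasurable
    · show (∫⁻ n, ‖(n:ℝ)‖₊ ∂(μ.map N)) < ⊤
      rw [lintegral_countable']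
      have heq : ∀ n : ℕ, (‖(n:ℝ)‖₊ : ℝ≥0∞) * (μ.map N) {n}
          = ENNReal.ofReal ((n:ℝ) * (μ {ω | N ω = n}).toReal) := by
        intro n
        have h1 : (‖(n:ℝ)‖₊ : ℝ≥0∞) = ENNReal.ofReal (n:ℝ) := by
          rw [Real.nnnorm_of_nonneg (by positivity)]; exact (ENNReal.ofReal_eq_coe_nnreal _).symm
        rw [ENNReal.ofReal_mul (by positivity), ENNReal.ofReal_toReal (measure_ne_top μ _),
          hmap n, h1]
      rw [tsum_congr heq, ← ENNReal.ofReal_tsum_of_nonneg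
        (fun n => by positivity) (by
          have := hsumq 1
          refine this.congr (fun n => ?_)
          rw [pow_one])]
      exact ENNReal.ofReal_lt_top
  have hEN : (∫ ω, (N ω : ℝ) ∂μ) = ∑' k : ℕ, (k:ℝ) * (μ {ω | N ω = k}).toReal := by
    rw [← integral_map hNmeas.aemeasurable hint.1, integral_countable' hint]
    refine tsum_congr (fun k => ?_)
    rw [measureReal_def, hmap k, smul_eq_mul, mul_comm]
  have hval : (∫ ω, (N ω : ℝ) ∂μ) * b ^ α
      = ∑' k : ℕ, (μ {ω | N ω = k}).toReal * ((k:ℝ) * b ^ α) := by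
    rw [hEN, ← tsum_mul_right]
    exact tsum_congr (fun k => by ring)
  -- main limit
  have hnf := nfold_tail μ hα S hSmeas hSnonneg hSindep hSident htail
  obtain ⟨M, hM0, hsup⟩ := sup_bound μ hα htail
  set n0 : ℕ := ⌈α⌉₊ + 1 with hn0
  rw [hval]
  have hfun : (fun x : ℝ => x ^ α * (μ {ω | (∑ i ∈ Finset.Icc 1 (N ω), S i ω) > x}).toReal)
      = fun x : ℝ => ∑' k : ℕ, x ^ α * ((μ {ω | N ω = k}).toReal
          * (μ {ω | (∑ i ∈ Finset.Icc 1 k, S i ω) > x}).toReal) := by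
    funext x
    rw [hdecomp x]
    exact tsum_mul_left.symm
  rw [hfun]
  refine tendsto_tsum_of_dominated_convergence
    (bound := fun k : ℕ => M * (k:ℝ)^n0 * (μ {ω | N ω = k}).toReal) ?_ ?_ ?_
  · -- summability of the bound
    refine ((hsumq n0).mul_left M).congr (fun k => by ring)
  · -- pointwise limits
    intro k
    exact ((hnf k).const_mul ((μ {ω | N ω = k}).toReal)).congr (fun x => by ring)
  · -- uniform bound
    filter_upwards [eventually_ge_atTop (1:ℝ)] with x hx
    intro k
    have hx0 : (0:ℝ) < x := by linarith
    have hxnn : (0:ℝ) ≤ x ^ α := Real.rpow_nonneg hx0.le α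
    rw [Real.norm_of_nonneg (by positivity)]
    rcases Nat.eq_zero_or_pos k with hk | hk
    · subst hk
      have h0 : {ω : Ω | (∑ i ∈ Finset.Icc 1 0, S i ω) > x} = ∅ := by
        ext ω
        simp only [Set.mem_setOf_eq, Set.mem_empty_iff_false, iff_false, not_lt]
        rw [show Finset.Icc 1 0 = ∅ from Finset.Icc_eq_empty (by omega)]
        simp only [Finset.sum_empty]
        linarith
      rw [h0]
      simp
    · have hb2 := kfold_bound μ hα hM0 S hSmeas hSident hsup k hk x hx
      have hk1 : (1:ℝ) ≤ (k:ℝ) := by exact_mod_cast hk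
      have hkk : (k:ℝ)^α * (k:ℝ) ≤ (k:ℝ)^n0 := by
        have h1 : (k:ℝ)^α * (k:ℝ) = (k:ℝ) ^ (α + 1) := by
          rw [Real.rpow_add (by linarith), Real.rpow_one]
        have h2 : (k:ℝ) ^ (α+1) ≤ (k:ℝ) ^ ((n0:ℕ):ℝ) := by
          refine Real.rpow_le_rpow_of_exponent_le hk1 ?_
          have := Nat.le_ceil α
          rw [hn0]; push_cast; linarith
        rw [Real.rpow_natCast] at h2
        rw [h1]; exact h2
      have hstep : (μ {ω | N ω = k}).toReal
            * (x ^ α * (μ {ω | (∑ i ∈ Finset.Icc 1 k, S i ω) > x}).toReal)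
          ≤ (μ {ω | N ω = k}).toReal * (M * ((k:ℝ)^α * (k:ℝ))) := by
        refine mul_le_mul_of_nonneg_left ?_ (hqnn k)
        calc x ^ α * (μ {ω | (∑ i ∈ Finset.Icc 1 k, S i ω) > x}).toReal
            ≤ M * (k:ℝ)^α * (k:ℝ) := hb2
          _ = M * ((k:ℝ)^α * (k:ℝ)) := by ring
      have hstep2 : (μ {ω | N ω = k}).toReal * (M * ((k:ℝ)^α * (k:ℝ)))
          ≤ (μ {ω | N ω = k}).toReal * (M * (k:ℝ)^n0) :=
        mul_le_mul_of_nonneg_left (mul_le_mul_of_nonneg_left hkk hM0) (hqnn k)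
      calc x ^ α * ((μ {ω | N ω = k}).toReal
              * (μ {ω | (∑ i ∈ Finset.Icc 1 k, S i ω) > x}).toReal)
          = (μ {ω | N ω = k}).toReal
              * (x ^ α * (μ {ω | (∑ i ∈ Finset.Icc 1 k, S i ω) > x}).toReal) := by ring
        _ ≤ (μ {ω | N ω = k}).toReal * (M * ((k:ℝ)^α * (k:ℝ))) := hstep
        _ ≤ (μ {ω | N ω = k}).toReal * (M * (k:ℝ)^n0) := hstep2
        _ = M * (k:ℝ)^n0 * (μ {ω | N ω = k}).toReal := by ring
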